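/- For 1 < p ≤ 2, μ ≥ 0, and any matrices A, B: |S(A) - S(B)| ≤ C |A - B|^{p-1}, where S(A) = (μ+|A|)^{p-2} A and C depends only on p. In particular S is (p-1)-Hölder continuous uniformly in μ ≥ 0. -/

import Mathlib

open Finset

noncomputable def frob (A : Matrix (Fin 3) (Fin 3) ℝ) : ℝ :=
  Real.sqrt (∑ i, ∑ j, (A i j) ^ 2)

noncomputable def Smap (μ p : ℝ) (A : Matrix (Fin 3) (Fin 3) ℝ) :
    Matrix (Fin 3) (Fin 3) ℝ :=
  ((μ + frob A) ^ (p - 2) : ℝ) • A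

noncomputable def emb (A : Matrix (Fin 3) (Fin 3) ℝ) : EuclideanSpace ℝ (Fin 3 × Fin 3) :=
  WithLp.toLp 2 (fun q : Fin 3 × Fin 3 => A q.1 q.2)

lemma frob_eq_norm (A : Matrix (Fin 3) (Fin 3) ℝ) : frob A = ‖emb A‖ := by
  rw [EuclideanSpace.norm_eq, frob]
  congr 1
  rw [Fintype.sum_prod_type]
  simp [emb, Real.norm_eq_abs, sq_abs]

lemma emb_sub (A B : Matrix (Fin 3) (Fin 3) ℝ) : emb (A - B) = emb A - emb B := by
  ext q; simp [emb]

lemma emb_add (A B : Matrix (Fin 3) (Fin 3) ℝ) : emb (A + B) = emb A + emb B := by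
  ext q; simp [emb]

lemma emb_smul (c : ℝ) (A : Matrix (Fin 3) (Fin 3) ℝ) : emb (c • A) = c • emb A := by
  ext q; simp [emb]

lemma frob_nonneg (A : Matrix (Fin 3) (Fin 3) ℝ) : 0 ≤ frob A := Real.sqrt_nonneg _

lemma frob_add_le (A B : Matrix (Fin 3) (Fin 3) ℝ) : frob (A + B) ≤ frob A + frob B := by
  rw [frob_eq_norm, frob_eq_norm, frob_eq_norm, emb_add]; exact norm_add_le _ _

lemma frob_smul (c : ℝ) (A : Matrix (Fin 3) (Fin 3) ℝ) : frob (c • A) = |c| * frob A := by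
  rw [frob_eq_norm, frob_eq_norm, emb_smul, norm_smul, Real.norm_eq_abs]

lemma frob_sub_le (A B : Matrix (Fin 3) (Fin 3) ℝ) : frob (A - B) ≤ frob A + frob B := by
  rw [frob_eq_norm, frob_eq_norm, frob_eq_norm, emb_sub]; exact norm_sub_le _ _

lemma abs_frob_sub_frob_le (A B : Matrix (Fin 3) (Fin 3) ℝ) :
    |frob A - frob B| ≤ frob (A - B) := by
  rw [frob_eq_norm, frob_eq_norm, frob_eq_norm, emb_sub]; exact abs_norm_sub_norm_le _ _

lemma frob_sub_comm (A B : Matrix (Fin 3) (Fin 3) ℝ) : frob (A - B) = frob (B - A) := by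
  rw [frob_eq_norm, frob_eq_norm, emb_sub, emb_sub, ← norm_neg, neg_sub]

lemma eq_of_frob_sub_eq_zero {A B : Matrix (Fin 3) (Fin 3) ℝ} (h : frob (A - B) = 0) :
    A = B := by
  rw [frob_eq_norm, norm_eq_zero, emb_sub, sub_eq_zero] at h
  funext i j
  have := congrArg (fun v => v (i, j)) h
  simpa [emb] using this

/-- Bernoulli inequality for exponents in `(-1, 0]`. -/
lemma bern_neg {s q : ℝ} (hs : 0 ≤ s) (hq1 : -1 < q) (hq0 : q ≤ 0) :
    1 + q * s ≤ (1 + s) ^ q := by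
  have h1s : (0:ℝ) < 1 + s := by linarith
  rcases le_or_gt (1 + q * s) 0 with h | h
  · exact h.trans (Real.rpow_nonneg h1s.le q)
  · have hr : (1 + s) ^ (-q) ≤ 1 + (-q) * s :=
      rpow_one_add_le_one_add_mul_self (by linarith) (by linarith) (by linarith)
    have hpos : (0:ℝ) < (1 + s) ^ (-q) := Real.rpow_pos_of_pos h1s _
    have key : (1 + q * s) * (1 + s) ^ (-q) ≤ 1 := by
      have h2 : (1 + q * s) * (1 + s) ^ (-q) ≤ (1 + q * s) * (1 + (-q) * s) :=
        mul_le_mul_of_nonneg_left hr h.le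
      nlinarith [sq_nonneg (q * s)]
    calc 1 + q * s ≤ 1 / (1 + s) ^ (-q) := (le_div_iff₀ hpos).mpr key
      _ = (1 + s) ^ q := by rw [one_div, ← Real.rpow_neg h1s.le, neg_neg]

/-- `x^q - y^q ≤ (-q) x^(q-1) (y - x)` for `0 < x ≤ y`, `-1 < q ≤ 0`. -/
lemma rpow_sub_rpow_le {x y q : ℝ} (hx : 0 < x) (hxy : x ≤ y) (hq1 : -1 < q) (hq0 : q ≤ 0) :
    x ^ q - y ^ q ≤ (-q) * x ^ (q - 1) * (y - x) := by
  set s : ℝ := (y - x) / x with hsdef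
  have hs : 0 ≤ s := div_nonneg (by linarith) hx.le
  have hy : y = x * (1 + s) := by rw [hsdef]; field_simp; ring
  have hb : 1 + q * s ≤ (1 + s) ^ q := bern_neg hs hq1 hq0
  have hxq : (0:ℝ) < x ^ q := Real.rpow_pos_of_pos hx _
  have hmul : y ^ q = x ^ q * (1 + s) ^ q := by
    rw [hy, Real.mul_rpow hx.le (by linarith)]
  have h1 : x ^ q * (1 + q * s) ≤ y ^ q := by
    rw [hmul]; exact mul_le_mul_of_nonneg_left hb hxq.le
  have hx1 : x ^ (q - 1) * x = x ^ q := by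
    rw [← Real.rpow_add_one hx.ne' (q - 1)]; ring_nf
  have hqs : x ^ q * (q * s) = q * (x ^ (q - 1) * (y - x)) := by
    rw [← hx1, hsdef]
    field_simp
  nlinarith [h1]

lemma key_lemma (p : ℝ) (hp1 : 1 < p) (hp2 : p ≤ 2) (μ : ℝ) (hμ : 0 ≤ μ)
    (A B : Matrix (Fin 3) (Fin 3) ℝ) (hba : frob B ≤ frob A) :
    frob (Smap μ p A - Smap μ p B) ≤ 4 * frob (A - B) ^ (p - 1) := by
  set a := frob A with hadef
  set b := frob B with hbdef
  set t := frob (A - B) with htdef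
  have ht0 : 0 ≤ t := frob_nonneg _
  rcases eq_or_lt_of_le ht0 with h0 | ht
  · -- t = 0 : A = B
    have hAB : A = B := eq_of_frob_sub_eq_zero h0.symm
    rw [hAB, sub_self]
    have : frob (0 : Matrix (Fin 3) (Fin 3) ℝ) = 0 := by
      simp [frob]
    rw [this, ← h0, Real.zero_rpow (by linarith : p - 1 ≠ 0)]
    norm_num
  · -- t > 0
    have hb0 : 0 ≤ b := frob_nonneg _
    have ha2 : t ≤ 2 * a := by
      have := frob_sub_le A B
      rw [← hadef, ← hbdef, ← htdef] at this
      linarith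
    have ha : 0 < a := by linarith
    set c1 : ℝ := (μ + a) ^ (p - 2) with hc1def
    set c2 : ℝ := (μ + b) ^ (p - 2) with hc2def
    have hy : 0 < μ + a := by linarith
    have hc1nn : 0 ≤ c1 := Real.rpow_nonneg hy.le _
    -- decomposition
    have hdecomp : Smap μ p A - Smap μ p B = c1 • (A - B) + (c1 - c2) • B := by
      rw [Smap, Smap, ← hadef, ← hbdef, ← hc1def, ← hc2def, smul_sub, sub_smul]
      abel
    have hLHS : frob (Smap μ p A - Smap μ p B) ≤ c1 * t + |c1 - c2| * b := by
      rw [hdecomp]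
      calc frob (c1 • (A - B) + (c1 - c2) • B)
          ≤ frob (c1 • (A - B)) + frob ((c1 - c2) • B) := frob_add_le _ _
        _ = |c1| * t + |c1 - c2| * b := by rw [frob_smul, frob_smul, ← htdef, ← hbdef]
        _ = c1 * t + |c1 - c2| * b := by rw [abs_of_nonneg hc1nn]
    have htp : 0 < t ^ (p - 1) := Real.rpow_pos_of_pos ht _
    have htp2 : 0 < t ^ (p - 2) := Real.rpow_pos_of_pos ht _
    have hmul : t ^ (p - 2) * t = t ^ (p - 1) := by
      rw [← Real.rpow_add_one ht.ne' (p - 2)]; ring_nf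
    -- term 1
    have hterm1 : c1 * t ≤ 2 * t ^ (p - 1) := by
      have h1 : c1 ≤ a ^ (p - 2) :=
        Real.rpow_le_rpow_of_nonpos ha (by linarith) (by linarith)
      have h2 : a ^ (p - 2) ≤ (t / 2) ^ (p - 2) :=
        Real.rpow_le_rpow_of_nonpos (by linarith) (by linarith) (by linarith)
      have h3 : (t / 2) ^ (p - 2) = t ^ (p - 2) / 2 ^ (p - 2) :=
        Real.div_rpow ht0 (by norm_num) _
      have h4 : ((2:ℝ)) ^ (-(1:ℝ)) ≤ (2:ℝ) ^ (p - 2) :=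
        Real.rpow_le_rpow_of_exponent_le (by norm_num) (by linarith)
      have h5 : ((2:ℝ)) ^ (-(1:ℝ)) = 1/2 := by
        rw [Real.rpow_neg_one]; norm_num
      have h45 : (1:ℝ)/2 ≤ (2:ℝ) ^ (p - 2) := h5 ▸ h4
      have h6 : t ^ (p - 2) / 2 ^ (p - 2) ≤ t ^ (p - 2) / (1/2) :=
        div_le_div_of_nonneg_left htp2.le (by norm_num) h45
      have h7 : t ^ (p - 2) / (1/2) = 2 * t ^ (p - 2) := by ring
      have hc1 : c1 ≤ 2 * t ^ (p - 2) := by linarith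
      calc c1 * t ≤ (2 * t ^ (p - 2)) * t := mul_le_mul_of_nonneg_right hc1 ht0
        _ = 2 * t ^ (p - 1) := by rw [mul_assoc, hmul]
    -- term 2
    have hterm2 : |c1 - c2| * b ≤ 2 * t ^ (p - 1) := by
      rcases eq_or_lt_of_le hb0 with hb | hb
      · rw [← hb, mul_zero]; positivity
      · have hx : 0 < μ + b := by linarith
        have hc21 : c1 ≤ c2 :=
          Real.rpow_le_rpow_of_nonpos hx (by linarith) (by linarith)
        rw [abs_of_nonpos (by linarith), neg_sub]
        rcases le_or_gt t b with htb | hbt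
        · -- b ≥ t : Bernoulli estimate
          have hber : c2 - c1 ≤ (2 - p) * (μ + b) ^ (p - 3) * (a - b) := by
            have := rpow_sub_rpow_le hx (show μ + b ≤ μ + a by linarith)
              (show (-1:ℝ) < p - 2 by linarith) (by linarith)
            rw [← hc2def, ← hc1def] at this
            convert this using 2 <;> ring_nf
          have habt : a - b ≤ t := by
            have := abs_frob_sub_frob_le A B
            rw [← hadef, ← hbdef, ← htdef] at this
            exact (abs_le.mp this).2
          have hd0 : 0 ≤ a - b := by linarith
          have hx3 : 0 ≤ (μ + b) ^ (p - 3) := Real.rpow_nonneg hx.le _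
          have hx2 : (μ + b) ^ (p - 3) * (μ + b) = (μ + b) ^ (p - 2) := by
            rw [← Real.rpow_add_one hx.ne' (p - 3)]; ring_nf
          have hxt : (μ + b) ^ (p - 2) ≤ t ^ (p - 2) :=
            Real.rpow_le_rpow_of_nonpos ht (by linarith) (by linarith)
          have hcoef : 0 ≤ (2 - p) * (μ + b) ^ (p - 3) :=
            mul_nonneg (by linarith) hx3
          calc (c2 - c1) * b
              ≤ ((2 - p) * (μ + b) ^ (p - 3) * (a - b)) * b :=
                mul_le_mul_of_nonneg_right hber hb0
            _ ≤ ((2 - p) * (μ + b) ^ (p - 3) * t) * (μ + b) := by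
                apply mul_le_mul (mul_le_mul_of_nonneg_left habt hcoef) (by linarith) hb0
                exact mul_nonneg hcoef ht0
            _ = (2 - p) * ((μ + b) ^ (p - 3) * (μ + b)) * t := by ring
            _ = (2 - p) * (μ + b) ^ (p - 2) * t := by rw [hx2]
            _ ≤ 1 * t ^ (p - 2) * t := by
                apply mul_le_mul_of_nonneg_right _ ht0
                exact mul_le_mul (by linarith) hxt (Real.rpow_nonneg hx.le _) (by norm_num)
            _ = t ^ (p - 1) := by rw [one_mul, hmul]
            _ ≤ 2 * t ^ (p - 1) := by linarith
        · -- b < t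
          have h1 : c2 ≤ b ^ (p - 2) :=
            Real.rpow_le_rpow_of_nonpos hb (by linarith) (by linarith)
          have h2 : b ^ (p - 2) * b = b ^ (p - 1) := by
            rw [← Real.rpow_add_one hb.ne' (p - 2)]; ring_nf
          have h3 : b ^ (p - 1) ≤ t ^ (p - 1) :=
            Real.rpow_le_rpow hb0 hbt.le (by linarith)
          calc (c2 - c1) * b ≤ c2 * b := by nlinarith
            _ ≤ b ^ (p - 2) * b := mul_le_mul_of_nonneg_right h1 hb0
            _ = b ^ (p - 1) := h2
            _ ≤ t ^ (p - 1) := h3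
            _ ≤ 2 * t ^ (p - 1) := by linarith
    calc frob (Smap μ p A - Smap μ p B) ≤ c1 * t + |c1 - c2| * b := hLHS
      _ ≤ 4 * t ^ (p - 1) := by linarith

/-- `(p-1)`-Hölder continuity of `S`, uniformly in `μ ≥ 0`, for `1 < p ≤ 2`. -/
theorem statement13 (p : ℝ) (hp1 : 1 < p) (hp2 : p ≤ 2) :
    ∃ C : ℝ, 0 < C ∧ ∀ (μ : ℝ), 0 ≤ μ → ∀ A B : Matrix (Fin 3) (Fin 3) ℝ,
      frob (Smap μ p A - Smap μ p B) ≤ C * frob (A - B) ^ (p - 1) := by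
  refine ⟨4, by norm_num, fun μ hμ A B => ?_⟩
  rcases le_total (frob B) (frob A) with h | h
  · exact key_lemma p hp1 hp2 μ hμ A B h
  · have := key_lemma p hp1 hp2 μ hμ B A h
    rw [frob_sub_comm (Smap μ p A) (Smap μ p B), frob_sub_comm A B]
    exact this
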